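/- arXiv:0903.5466 — 9 statements merged into one kernel-verified Lean document; each statement's English description precedes it below -/
import Mathlib

section
/- For all natural numbers n and k with 0 ≤ k < ⌊n/2⌋, the ℓ₁ distance between the distributions p_k and p_{k+1} equals 2(n − 2k − 1)/(n − k); that is, the sum over ℓ from 0 to k+1 of |p_k(ℓ) − p_{k+1}(ℓ)| equals 2(n − 2k − 1)/(n − k). -/
/-- The outcome distribution of weak Schur sampling on an `n`-qubit basis state of
Hamming weight `k`: `p_k(ℓ) = (C(n,ℓ) − C(n,ℓ−1))/C(n,k)` for `ℓ ≤ k` (with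
`C(n,ℓ−1)` taken to be `0` when `ℓ = 0`), and `p_k(ℓ) = 0` for `ℓ > k`. -/
noncomputable def schurProb (n k ℓ : ℕ) : ℝ :=
  if ℓ ≤ k then
    ((n.choose ℓ : ℝ) - (if ℓ = 0 then 0 else (n.choose (ℓ - 1) : ℝ))) / (n.choose k : ℝ)
  else 0

lemma schur_telescope (n m : ℕ) :
    ∑ ℓ ∈ Finset.range (m + 1),
      ((n.choose ℓ : ℝ) - if ℓ = 0 then 0 else (n.choose (ℓ - 1) : ℝ)) = n.choose m := by
  induction m with
  | zero => simp
  | succ m ih => rw [Finset.sum_range_succ, ih]; simp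

/-- For `0 ≤ k < ⌊n/2⌋`, the ℓ₁ distance between the weak Schur sampling
distributions `p_k` and `p_{k+1}` equals `2(n − 2k − 1)/(n − k)`. -/
theorem schurProb_l1_dist (n k : ℕ) (hk : k < n / 2) :
    ∑ ℓ ∈ Finset.range (k + 2), |schurProb n k ℓ - schurProb n (k + 1) ℓ|
      = 2 * ((n : ℝ) - 2 * k - 1) / ((n : ℝ) - k) := by
  have hn : 2 * k + 2 ≤ n := by omega
  set a : ℝ := (n.choose k : ℝ) with ha_def
  set b : ℝ := (n.choose (k + 1) : ℝ) with hb_def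
  have ha : 0 < a := by
    rw [ha_def]; exact_mod_cast Nat.choose_pos (by omega : k ≤ n)
  have hb : 0 < b := by
    rw [hb_def]; exact_mod_cast Nat.choose_pos (by omega : k + 1 ≤ n)
  have hab : a ≤ b := by
    rw [ha_def, hb_def]; exact_mod_cast Nat.choose_le_succ_of_lt_half_left hk
  have hnk : (0 : ℝ) < (n : ℝ) - k := by
    have : (k : ℝ) + 1 ≤ n := by exact_mod_cast (by omega : k + 1 ≤ n)
    linarith
  have hkey : b * ((k : ℝ) + 1) = a * ((n : ℝ) - k) := by
    have h2 : ((n.choose (k + 1) : ℝ)) * ((k : ℝ) + 1)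
        = (n.choose k : ℝ) * (((n - k : ℕ) : ℝ)) := by
      exact_mod_cast Nat.choose_succ_right_eq n k
    rw [Nat.cast_sub (by omega : k ≤ n)] at h2
    rw [ha_def, hb_def]; linarith
  rw [Finset.sum_range_succ]
  have hterm : ∀ ℓ ∈ Finset.range (k + 1), |schurProb n k ℓ - schurProb n (k + 1) ℓ|
      = ((n.choose ℓ : ℝ) - if ℓ = 0 then 0 else (n.choose (ℓ - 1) : ℝ)) * (1 / a - 1 / b) := by
    intro ℓ hℓ
    rw [Finset.mem_range] at hℓ
    have hℓk : ℓ ≤ k := by omega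
    have hd : (0 : ℝ) ≤ (n.choose ℓ : ℝ) - if ℓ = 0 then 0 else (n.choose (ℓ - 1) : ℝ) := by
      rcases Nat.eq_zero_or_pos ℓ with h0 | h0
      · simp [h0]
      · have hmono : n.choose (ℓ - 1) ≤ n.choose ℓ := by
          have := Nat.choose_le_succ_of_lt_half_left
            (show ℓ - 1 < n / 2 by omega) (n := n)
          have he : ℓ - 1 + 1 = ℓ := by omega
          rwa [he] at this
        have h0' : ℓ ≠ 0 := by omega
        simp only [h0', if_false]
        exact sub_nonneg.mpr (by exact_mod_cast hmono)
    have hfac : (0 : ℝ) ≤ 1 / a - 1 / b := by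
      have := one_div_le_one_div_of_le ha hab
      linarith
    rw [schurProb, schurProb, if_pos hℓk, if_pos (by omega : ℓ ≤ k + 1)]
    have heq : ((n.choose ℓ : ℝ) - if ℓ = 0 then 0 else (n.choose (ℓ - 1) : ℝ)) / a
        - ((n.choose ℓ : ℝ) - if ℓ = 0 then 0 else (n.choose (ℓ - 1) : ℝ)) / b
        = ((n.choose ℓ : ℝ) - if ℓ = 0 then 0 else (n.choose (ℓ - 1) : ℝ)) * (1 / a - 1 / b) := by
      ring
    rw [heq, abs_of_nonneg (mul_nonneg hd hfac)]
  rw [Finset.sum_congr rfl hterm, ← Finset.sum_mul, schur_telescope n k]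
  have hlast1 : schurProb n k (k + 1) = 0 := by
    rw [schurProb, if_neg (by omega)]
  have hlast2 : schurProb n (k + 1) (k + 1) = (b - a) / b := by
    rw [schurProb, if_pos le_rfl]
    simp [hb_def, ha_def]
  rw [hlast1, hlast2, zero_sub, abs_neg,
    abs_of_nonneg (div_nonneg (by linarith) hb.le)]
  have hdiv : a / b = ((k : ℝ) + 1) / ((n : ℝ) - k) := by
    rw [div_eq_div_iff hb.ne' hnk.ne']
    linarith [hkey]
  have hL : a * (1 / a - 1 / b) + (b - a) / b = 2 - 2 * (a / b) := by
    field_simp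
    ring
  rw [hL, hdiv]
  field_simp
  ring
end

section
/- For all natural numbers n, t, k with 1 ≤ t ≤ k ≤ ⌊n/2⌋, the failure probability of the threshold algorithm satisfies ∑_{ℓ=0}^{t−1} p_k(ℓ) = C(n,t−1)/C(n,k) ≤ t/(n − t + 1), with equality when k = t. -/
lemma choose_mono_left_half {n a b : ℕ} (h : a ≤ b) (hb : b ≤ n / 2) :
    n.choose a ≤ n.choose b := by
  induction b, h using Nat.le_induction with
  | base => exact le_refl _
  | succ m hm ih =>
      exact (ih (le_trans (Nat.le_succ m) hb)).trans
        (Nat.choose_le_succ_of_lt_half_left (lt_of_lt_of_le (Nat.lt_succ_self m) hb))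

/-- For `1 ≤ t ≤ k ≤ ⌊n/2⌋`, the failure probability of the threshold algorithm
satisfies `∑_{ℓ=0}^{t−1} p_k(ℓ) = C(n,t−1)/C(n,k) ≤ t/(n − t + 1)`, with equality
when `k = t`. -/
theorem threshold_failure_prob (n t k : ℕ) (ht : 1 ≤ t) (htk : t ≤ k) (hk : k ≤ n / 2) :
    (∑ ℓ ∈ Finset.range t, schurProb n k ℓ) = (n.choose (t - 1) : ℝ) / (n.choose k : ℝ) ∧
    (n.choose (t - 1) : ℝ) / (n.choose k : ℝ) ≤ (t : ℝ) / ((n : ℝ) - t + 1) ∧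
    (k = t → (n.choose (t - 1) : ℝ) / (n.choose k : ℝ) = (t : ℝ) / ((n : ℝ) - t + 1)) := by
  have hkn : k ≤ n := le_trans hk (Nat.div_le_self n 2)
  have htn : t ≤ n := le_trans htk hkn
  have hck : (0 : ℝ) < (n.choose k : ℝ) := by
    exact_mod_cast Nat.choose_pos hkn
  -- sum telescopes
  have hsum : ∀ m : ℕ, m ≤ k →
      (∑ ℓ ∈ Finset.range m, schurProb n k ℓ) =
        (if m = 0 then 0 else (n.choose (m - 1) : ℝ)) / (n.choose k : ℝ) := by
    intro m hm
    induction m with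
    | zero => simp
    | succ p ih =>
        rw [Finset.sum_range_succ, ih (le_trans (Nat.le_succ p) hm)]
        simp only [schurProb, if_pos (Nat.lt_of_succ_le hm).le, Nat.succ_ne_zero, if_false,
          Nat.add_sub_cancel]
        rcases Nat.eq_zero_or_pos p with h0 | h0
        · subst h0; simp
        · rw [if_neg h0.ne']
          field_simp
          ring
  have hsum' := hsum t htk
  rw [if_neg (by omega : t ≠ 0)] at hsum'
  -- key identity: C(n,t) * t = C(n,t-1) * (n - t + 1)
  have hid : (n.choose t : ℝ) * t = (n.choose (t - 1) : ℝ) * ((n : ℝ) - t + 1) := by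
    have := Nat.choose_succ_right_eq n (t - 1)
    rw [Nat.sub_add_cancel ht] at this
    have hcast : ((n.choose t * t : ℕ) : ℝ) = ((n.choose (t-1) * (n - (t-1)) : ℕ) : ℝ) := by
      exact_mod_cast congrArg (Nat.cast : ℕ → ℝ) this
    push_cast [Nat.cast_sub (by omega : t - 1 ≤ n)] at hcast
    rw [hcast]
    have : ((t - 1 : ℕ) : ℝ) = (t : ℝ) - 1 := by
      push_cast [Nat.cast_sub ht]; ring
    rw [this]; ring
  have hden : (0 : ℝ) < (n : ℝ) - t + 1 := by
    have : (t : ℝ) ≤ n := by exact_mod_cast htn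
    linarith
  have hct : (0 : ℝ) < (n.choose t : ℝ) := by exact_mod_cast Nat.choose_pos htn
  have heq : (n.choose (t - 1) : ℝ) / (n.choose t : ℝ) = (t : ℝ) / ((n : ℝ) - t + 1) := by
    rw [div_eq_div_iff hct.ne' hden.ne']
    linarith [hid]
  refine ⟨hsum', ?_, ?_⟩
  · calc (n.choose (t - 1) : ℝ) / (n.choose k : ℝ)
        ≤ (n.choose (t - 1) : ℝ) / (n.choose t : ℝ) := by
          apply div_le_div_of_nonneg_left (by positivity) hct
          exact_mod_cast choose_mono_left_half htk hk
      _ = (t : ℝ) / ((n : ℝ) - t + 1) := heq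
  · intro hkt; rw [hkt]; exact heq
end

section
/- For all natural numbers n ≥ 1 and k with k ≤ ⌊n/2⌋, the alternating sum ∑_{ℓ=0}^{k} (−1)^ℓ · (C(n,ℓ) − C(n,ℓ−1))/C(n,k) equals (−1)^k · (1 − 2k/n) as real numbers. -/
lemma schur_aux (m : ℕ) : ∀ k : ℕ,
    ∑ ℓ ∈ Finset.range (k + 1), (-1 : ℝ) ^ ℓ *
        (((m+1).choose ℓ : ℝ) - (if ℓ = 0 then 0 else ((m+1).choose (ℓ - 1) : ℝ)))
      = (-1 : ℝ) ^ k * (((m+1).choose k : ℝ)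
          - 2 * (if k = 0 then 0 else (m.choose (k - 1) : ℝ))) := by
  intro k
  induction k with
  | zero => simp
  | succ k ih =>
      rw [Finset.sum_range_succ, ih]
      have hpascal : ((m+1).choose (k+1) : ℝ) = (m.choose k : ℝ) + (m.choose (k+1) : ℝ) := by
        rw [Nat.choose_succ_succ]; push_cast; ring
      have hBk : ((m+1).choose k : ℝ) - (if k = 0 then 0 else (m.choose (k - 1) : ℝ))
          = (m.choose k : ℝ) := by
        rcases Nat.eq_zero_or_pos k with hk0 | hk0
        · subst hk0; simp
        · obtain ⟨j, rfl⟩ := Nat.exists_eq_add_of_lt hk0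
          simp only [Nat.zero_add, if_neg (Nat.succ_ne_zero j), Nat.add_sub_cancel]
          rw [Nat.choose_succ_succ]; push_cast; ring
      simp only [if_neg (Nat.succ_ne_zero k), Nat.add_sub_cancel]
      linear_combination 2 * (-1:ℝ)^k * hBk

/-- For `n ≥ 1` and `k ≤ ⌊n/2⌋`, the alternating sum
`∑_{ℓ=0}^{k} (−1)^ℓ (C(n,ℓ) − C(n,ℓ−1))/C(n,k)` (the difference between the
probabilities of an even and an odd weak Schur sampling outcome) equals
`(−1)^k (1 − 2k/n)`. -/
theorem schurProb_alternating_sum (n k : ℕ) (hn : 1 ≤ n) (hk : k ≤ n / 2) :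
    ∑ ℓ ∈ Finset.range (k + 1), (-1 : ℝ) ^ ℓ * schurProb n k ℓ
      = (-1 : ℝ) ^ k * (1 - 2 * (k : ℝ) / (n : ℝ)) := by
  obtain ⟨m, rfl⟩ := Nat.exists_eq_add_of_le hn
  set n := 1 + m with hn'
  have hkn : k ≤ n := le_trans hk (Nat.div_le_self n 2)
  have hC : (0 : ℝ) < (n.choose k : ℝ) := by
    exact_mod_cast Nat.choose_pos hkn
  have hN : (0 : ℝ) < (n : ℝ) := by positivity
  have hmn : n = m + 1 := by omega
  have key := schur_aux m k
  rw [← hmn] at key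
  have hsum : ∑ ℓ ∈ Finset.range (k + 1), (-1 : ℝ) ^ ℓ * schurProb n k ℓ
      = (∑ ℓ ∈ Finset.range (k + 1), (-1 : ℝ) ^ ℓ *
          ((n.choose ℓ : ℝ) - (if ℓ = 0 then 0 else (n.choose (ℓ - 1) : ℝ)))) / (n.choose k : ℝ) := by
    rw [Finset.sum_div]
    apply Finset.sum_congr rfl
    intro ℓ hℓ
    have : ℓ ≤ k := Nat.lt_succ_iff.mp (Finset.mem_range.mp hℓ)
    rw [schurProb, if_pos this]
    ring
  rw [hsum, key]
  have hfrac : (if k = 0 then (0:ℝ) else (m.choose (k - 1) : ℝ)) / (n.choose k : ℝ)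
      = (k : ℝ) / (n : ℝ) := by
    rcases Nat.eq_zero_or_pos k with hk0 | hk0
    · simp [hk0]
    · rw [if_neg (Nat.pos_iff_ne_zero.mp hk0)]
      have hk1 : k - 1 + 1 = k := Nat.succ_pred_eq_of_pos hk0
      have hmul := Nat.add_one_mul_choose_eq m (k-1)
      rw [hk1] at hmul
      have hmulR : ((n : ℝ)) * (m.choose (k-1) : ℝ) = (n.choose k : ℝ) * (k : ℝ) := by
        rw [hmn]; exact_mod_cast hmul
      rw [div_eq_div_iff hC.ne' hN.ne']
      linear_combination hmulR
  rw [mul_div_assoc, sub_div, mul_div_assoc, hfrac, div_self (ne_of_gt hC)]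
  ring
end

section
/- For all natural numbers n ≥ 1 and k with k ≤ ⌊n/2⌋, the probability that weak Schur sampling yields an even outcome, namely ∑_{ℓ ≤ k, ℓ even} p_k(ℓ), equals 1 − k/n when k is even and equals k/n when k is odd. -/
lemma schur_aux_s7 (n k : ℕ) (hn : 1 ≤ n) :
    ∑ ℓ ∈ (Finset.range (k + 1)).filter (fun ℓ => Even ℓ),
      ((n.choose ℓ : ℝ) - (if ℓ = 0 then 0 else (n.choose (ℓ - 1) : ℝ)))
    = if Even k then ((n - 1).choose k : ℝ) else ((n - 1).choose (k - 1) : ℝ) := by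
  obtain ⟨m, rfl⟩ : ∃ m, n = m + 1 := ⟨n - 1, by omega⟩
  induction k with
  | zero => norm_num [Finset.range_one, Finset.filter_singleton]
  | succ k ih =>
    rw [Finset.range_add_one, Finset.filter_insert]
    by_cases hek : Even (k + 1)
    · have hk1 : ¬ Even k := by
        simpa [Nat.even_add_one] using hek
      have hkpos : 1 ≤ k := by
        rcases Nat.eq_zero_or_pos k with h | h
        · subst h; simp at hk1
        · exact h
      obtain ⟨j, rfl⟩ : ∃ j, k = j + 1 := ⟨k - 1, by omega⟩
      rw [if_pos hek, Finset.sum_insert (by simp), ih]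
      simp only [hek, hk1, if_true, if_false]
      have h1 : (m + 1).choose (j + 1 + 1) = m.choose (j + 1) + m.choose (j + 1 + 1) :=
        Nat.choose_succ_succ m (j + 1)
      have h2 : (m + 1).choose (j + 1) = m.choose j + m.choose (j + 1) :=
        Nat.choose_succ_succ m j
      have hne : ¬ (j + 1 + 1 = 0) := by omega
      have he1 : j + 1 + 1 - 1 = j + 1 := by omega
      have he2 : m + 1 - 1 = m := by omega
      have he3 : j + 1 - 1 = j := by omega
      rw [if_neg hne, he1, he2, he3, h1, h2]
      push_cast
      ring
    · have hk1 : Even k := by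
        rcases Nat.even_or_odd k with h | h
        · exact h
        · exact absurd (Odd.add_one h) hek
      rw [if_neg hek, ih]
      simp only [hek, hk1, if_true, if_false, Nat.add_sub_cancel]

/-- For `n ≥ 1` and `k ≤ ⌊n/2⌋`, the probability that weak Schur sampling yields an
even outcome, `∑_{ℓ ≤ k, ℓ even} p_k(ℓ)`, equals `1 − k/n` when `k` is even, and
equals `k/n` when `k` is odd. -/
theorem schurProb_even_outcome (n k : ℕ) (hn : 1 ≤ n) (hk : k ≤ n / 2) :
    (Even k →
      ∑ ℓ ∈ (Finset.range (k + 1)).filter (fun ℓ => Even ℓ), schurProb n k ℓ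
        = 1 - (k : ℝ) / (n : ℝ)) ∧
    (Odd k →
      ∑ ℓ ∈ (Finset.range (k + 1)).filter (fun ℓ => Even ℓ), schurProb n k ℓ
        = (k : ℝ) / (n : ℝ)) := by
  have hkn : k ≤ n := le_trans hk (Nat.div_le_self n 2)
  have hCne : (n.choose k : ℝ) ≠ 0 := Nat.cast_ne_zero.mpr (Nat.choose_pos hkn).ne'
  have hnne : (n : ℝ) ≠ 0 := by positivity
  have hsum : ∑ ℓ ∈ (Finset.range (k + 1)).filter (fun ℓ => Even ℓ), schurProb n k ℓ
      = (if Even k then ((n - 1).choose k : ℝ) else ((n - 1).choose (k - 1) : ℝ)) / (n.choose k : ℝ) := by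
    rw [← schur_aux_s7 n k hn, Finset.sum_div]
    apply Finset.sum_congr rfl
    intro ℓ hℓ
    simp only [Finset.mem_filter, Finset.mem_range] at hℓ
    rw [schurProb, if_pos (Nat.lt_succ_iff.mp hℓ.1)]
  constructor
  · intro hke
    rw [hsum, if_pos hke]
    obtain ⟨m, rfl⟩ : ∃ m, n = m + 1 := ⟨n - 1, by omega⟩
    have h := Nat.choose_mul_succ_eq m k
    have hcast : (m.choose k : ℝ) * ((m:ℝ) + 1)
        = ((m+1).choose k : ℝ) * (((m:ℝ) + 1) - (k:ℝ)) := by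
      have := congrArg (Nat.cast : ℕ → ℝ) h
      push_cast [Nat.cast_sub hkn] at this
      push_cast
      linarith [this]
    simp only [Nat.add_sub_cancel]
    push_cast
    field_simp
    nlinarith [hcast]
  · intro hko
    rw [hsum, if_neg (Nat.not_even_iff_odd.mpr hko)]
    have hk1 : 1 ≤ k := hko.pos
    obtain ⟨m, rfl⟩ : ∃ m, n = m + 1 := ⟨n - 1, by omega⟩
    obtain ⟨j, rfl⟩ : ∃ j, k = j + 1 := ⟨k - 1, by omega⟩
    have h := Nat.add_one_mul_choose_eq m j
    simp only [Nat.add_sub_cancel]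
    have hcast : ((m:ℝ) + 1) * (m.choose j : ℝ)
        = ((m+1).choose (j+1) : ℝ) * ((j:ℝ) + 1) := by
      have := congrArg (Nat.cast : ℕ → ℝ) h
      push_cast at this
      linarith [this]
    push_cast
    field_simp
    nlinarith [hcast]
end

section
/- Let p₀, p₁ be real numbers with 0 ≤ p₁ ≤ p₀ ≤ 1 and p₀ + p₁ ≥ 1. Then: (i) for all q₀, q₁ ∈ [0,1], min{q₀·p₀ + q₁·(1 − p₀), (1 − q₀)·p₁ + (1 − q₁)·(1 − p₁)} ≤ p₀/(p₀ + p₁); and (ii) this bound is attained, e.g. by q₀ = 1/(p₀ + p₁) and q₁ = 0. -/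
/-- Let `0 ≤ p₁ ≤ p₀ ≤ 1` with `p₀ + p₁ ≥ 1`. Then (i) for all `q₀, q₁ ∈ [0,1]`,
the worst-case success probability
`min (q₀ p₀ + q₁ (1 − p₀)) ((1 − q₀) p₁ + (1 − q₁)(1 − p₁))` is at most
`p₀/(p₀ + p₁)`; and (ii) this bound is attained by `q₀ = 1/(p₀ + p₁)`, `q₁ = 0`. -/
theorem postprocessing_bound_large (p₀ p₁ : ℝ) (h₁ : 0 ≤ p₁) (h₂ : p₁ ≤ p₀) (h₃ : p₀ ≤ 1)
    (h₄ : 1 ≤ p₀ + p₁) :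
    (∀ q₀ q₁ : ℝ, q₀ ∈ Set.Icc (0 : ℝ) 1 → q₁ ∈ Set.Icc (0 : ℝ) 1 →
      min (q₀ * p₀ + q₁ * (1 - p₀)) ((1 - q₀) * p₁ + (1 - q₁) * (1 - p₁))
        ≤ p₀ / (p₀ + p₁)) ∧
    min ((1 / (p₀ + p₁)) * p₀ + 0 * (1 - p₀))
        ((1 - 1 / (p₀ + p₁)) * p₁ + (1 - 0) * (1 - p₁))
      = p₀ / (p₀ + p₁) := by
  have hs : 0 < p₀ + p₁ := by linarith
  constructor
  · rintro q₀ q₁ ⟨hq₀0, hq₀1⟩ ⟨hq₁0, hq₁1⟩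
    rw [le_div_iff₀ hs]
    have hA := min_le_left (q₀ * p₀ + q₁ * (1 - p₀)) ((1 - q₀) * p₁ + (1 - q₁) * (1 - p₁))
    have hB := min_le_right (q₀ * p₀ + q₁ * (1 - p₀)) ((1 - q₀) * p₁ + (1 - q₁) * (1 - p₁))
    nlinarith [mul_nonneg h₁ (sub_nonneg.2 hA), mul_nonneg (h₁.trans h₂) (sub_nonneg.2 hB),
      mul_nonneg hq₁0 (sub_nonneg.2 h₂)]
  · have h : (1 - 1 / (p₀ + p₁)) * p₁ + (1 - 0) * (1 - p₁)
        = (1 / (p₀ + p₁)) * p₀ + 0 * (1 - p₀) := by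
      field_simp
      ring
    rw [h, min_self]
    field_simp
    ring
end

section
/- Let p₀, p₁ be real numbers with 0 ≤ p₁ ≤ p₀ ≤ 1 and p₀ + p₁ ≤ 1. Then: (i) for all q₀, q₁ ∈ [0,1], min{q₀·p₀ + q₁·(1 − p₀), (1 − q₀)·p₁ + (1 − q₁)·(1 − p₁)} ≤ (1 − p₁)/(2 − p₀ − p₁); and (ii) this bound is attained, e.g. by q₀ = 1 and q₁ = (1 − p₀ − p₁)/(2 − p₀ − p₁). -/
/-- Let `0 ≤ p₁ ≤ p₀ ≤ 1` with `p₀ + p₁ ≤ 1`. Then (i) for all `q₀, q₁ ∈ [0,1]`,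
the worst-case success probability
`min (q₀ p₀ + q₁ (1 − p₀)) ((1 − q₀) p₁ + (1 − q₁)(1 − p₁))` is at most
`(1 − p₁)/(2 − p₀ − p₁)`; and (ii) this bound is attained by `q₀ = 1`,
`q₁ = (1 − p₀ − p₁)/(2 − p₀ − p₁)`. -/
theorem postprocessing_bound_small (p₀ p₁ : ℝ) (h₁ : 0 ≤ p₁) (h₂ : p₁ ≤ p₀) (h₃ : p₀ ≤ 1)
    (h₄ : p₀ + p₁ ≤ 1) :
    (∀ q₀ q₁ : ℝ, q₀ ∈ Set.Icc (0 : ℝ) 1 → q₁ ∈ Set.Icc (0 : ℝ) 1 →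
      min (q₀ * p₀ + q₁ * (1 - p₀)) ((1 - q₀) * p₁ + (1 - q₁) * (1 - p₁))
        ≤ (1 - p₁) / (2 - p₀ - p₁)) ∧
    min (1 * p₀ + ((1 - p₀ - p₁) / (2 - p₀ - p₁)) * (1 - p₀))
        ((1 - 1) * p₁ + (1 - (1 - p₀ - p₁) / (2 - p₀ - p₁)) * (1 - p₁))
      = (1 - p₁) / (2 - p₀ - p₁) := by
  have hD : (0:ℝ) < 2 - p₀ - p₁ := by linarith
  constructor
  · rintro q₀ q₁ ⟨hq₀0, hq₀1⟩ ⟨hq₁0, hq₁1⟩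
    by_contra h
    push_neg at h
    rw [lt_min_iff] at h
    obtain ⟨hA, hB⟩ := h
    rw [div_lt_iff₀ hD] at hA hB
    have h5 := mul_lt_mul_of_pos_left hA (by linarith : (0:ℝ) < 1 - p₁)
    have h6 := mul_le_mul_of_nonneg_left hB.le (by linarith : (0:ℝ) ≤ 1 - p₀)
    nlinarith [mul_nonneg (mul_nonneg hD.le (sub_nonneg.2 hq₀1)) (sub_nonneg.2 h₂)]
  · have hA : 1 * p₀ + ((1 - p₀ - p₁) / (2 - p₀ - p₁)) * (1 - p₀)
        = (1 - p₁) / (2 - p₀ - p₁) := by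
      field_simp
      ring
    have hB : (1 - 1) * p₁ + (1 - (1 - p₀ - p₁) / (2 - p₀ - p₁)) * (1 - p₁)
        = (1 - p₁) / (2 - p₀ - p₁) := by
      field_simp
      ring
    rw [hA, hB, min_self]
end

section
/- For all natural numbers n and t with 1 ≤ t ≤ ⌊n/2⌋, there exists q₀ ∈ [0,1] (namely q₀ = (n − t + 1)/(n + 1)) such that: (i) q₀ ≥ 1 − t/(n + 1), so that on inputs of weight k < t the algorithm outputting 0 with probability q₀ succeeds with probability at least 1 − t/(n + 1); and (ii) for every k with t ≤ k ≤ ⌊n/2⌋, 1 − q₀·∑_{ℓ=0}^{t−1} p_k(ℓ) ≥ 1 − t/(n + 1). Hence the threshold function Th_t can be computed from a weak Schur sampling outcome with worst-case success probability at least 1 − t/(n + 1). -/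
lemma choose_mono_half (n : ℕ) : ∀ {t k : ℕ}, t ≤ k → k ≤ n / 2 →
    n.choose t ≤ n.choose k := by
  intro t k htk hk
  induction k with
  | zero => simp [Nat.le_zero.mp htk]
  | succ m ih =>
    rcases Nat.lt_or_ge t (m+1) with h | h
    · exact le_trans (ih (Nat.lt_succ_iff.mp h) (le_trans (Nat.le_succ m) hk))
        (Nat.choose_le_succ_of_lt_half_left (Nat.lt_of_lt_of_le (Nat.lt_succ_self m) hk))
    · have : t = m + 1 := le_antisymm htk h
      simp [this]

lemma schur_sum (n k t : ℕ) (ht : 1 ≤ t) (htk : t ≤ k) :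
    ∑ ℓ ∈ Finset.range t, schurProb n k ℓ = (n.choose (t-1) : ℝ) / (n.choose k : ℝ) := by
  obtain ⟨s, rfl⟩ := Nat.exists_eq_add_of_le ht
  have hsum : ∀ ℓ ∈ Finset.range (1 + s), schurProb n k ℓ =
      ((n.choose ℓ : ℝ) - (if ℓ = 0 then 0 else (n.choose (ℓ - 1) : ℝ))) / (n.choose k : ℝ) := by
    intro ℓ hℓ
    have : ℓ ≤ k := by have := Finset.mem_range.mp hℓ; omega
    simp [schurProb, this]
  rw [Finset.sum_congr rfl hsum, ← Finset.sum_div]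
  congr 1
  rw [Nat.add_comm 1 s]
  rw [Finset.sum_range_succ']
  simp only [Nat.add_sub_cancel, Nat.succ_ne_zero, if_false, if_true]
  rw [Finset.sum_range_sub (fun j => (n.choose j : ℝ))]
  simp

/-- For `1 ≤ t ≤ ⌊n/2⌋` there exists `q₀ ∈ [0,1]` (namely `q₀ = (n − t + 1)/(n + 1)`)
such that (i) `q₀ ≥ 1 − t/(n + 1)` (success probability on inputs of weight `k < t`),
and (ii) for each `t ≤ k ≤ ⌊n/2⌋`, `1 − q₀ ∑_{ℓ=0}^{t−1} p_k(ℓ) ≥ 1 − t/(n + 1)`.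
Hence `Th_t` can be computed from a weak Schur sampling outcome with worst-case
success probability at least `1 − t/(n + 1)`. -/
theorem threshold_two_sided (n t : ℕ) (ht : 1 ≤ t) (htn : t ≤ n / 2) :
    ∃ q₀ : ℝ, q₀ ∈ Set.Icc (0 : ℝ) 1 ∧
      q₀ = ((n : ℝ) - t + 1) / ((n : ℝ) + 1) ∧
      q₀ ≥ 1 - (t : ℝ) / ((n : ℝ) + 1) ∧
      ∀ k : ℕ, t ≤ k → k ≤ n / 2 →
        1 - q₀ * ∑ ℓ ∈ Finset.range t, schurProb n k ℓ ≥ 1 - (t : ℝ) / ((n : ℝ) + 1) := by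
  have htn' : t ≤ n := le_trans htn (Nat.div_le_self n 2)
  have hn1 : (0:ℝ) < (n:ℝ) + 1 := by positivity
  have ht1 : (1:ℝ) ≤ (t:ℝ) := by exact_mod_cast ht
  have htnR : (t:ℝ) ≤ (n:ℝ) := by exact_mod_cast htn'
  refine ⟨((n : ℝ) - t + 1) / ((n : ℝ) + 1), ⟨div_nonneg (by linarith) (le_of_lt hn1), ?_⟩, rfl, ?_, ?_⟩
  · rw [div_le_one hn1]; linarith
  · have : ((n : ℝ) - t + 1) / ((n : ℝ) + 1) = 1 - (t:ℝ)/((n:ℝ)+1) := by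
      field_simp; ring
    rw [this]
  · intro k hk hk2
    have hkn : k ≤ n := le_trans hk2 (Nat.div_le_self n 2)
    have hck : (0:ℝ) < (n.choose k : ℝ) := by
      exact_mod_cast Nat.choose_pos hkn
    rw [schur_sum n k t ht hk]
    have key : ((n : ℝ) - t + 1) * (n.choose (t-1) : ℝ) ≤ (t:ℝ) * (n.choose k : ℝ) := by
      have hid : n.choose t * t = n.choose (t-1) * (n - (t-1)) := by
        have := Nat.choose_succ_right_eq n (t-1)
        have h : t - 1 + 1 = t := by omega
        rwa [h] at this
      have hmono : n.choose t ≤ n.choose k := choose_mono_half n hk hk2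
      have hnat : (n - (t-1)) * n.choose (t-1) ≤ t * n.choose k := by
        calc (n - (t-1)) * n.choose (t-1) = n.choose t * t := by rw [hid]; ring
        _ ≤ n.choose k * t := Nat.mul_le_mul_right t hmono
        _ = t * n.choose k := Nat.mul_comm _ _
      have hcast : ((n : ℝ) - t + 1) = ((n - (t-1) : ℕ) : ℝ) := by
        have h1 : t - 1 ≤ n := by omega
        push_cast [Nat.cast_sub h1]
        have : ((t:ℕ) - 1 : ℕ) = t - 1 := rfl
        rw [Nat.cast_sub ht]
        ring
      rw [hcast]
      exact_mod_cast hnat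
    have : ((n : ℝ) - t + 1) / ((n : ℝ) + 1) * ((n.choose (t-1) : ℝ) / (n.choose k : ℝ))
        ≤ (t:ℝ) / ((n:ℝ)+1) := by
      rw [div_mul_div_comm, div_le_div_iff₀ (by positivity) hn1]
      calc ((n : ℝ) - t + 1) * (n.choose (t-1) : ℝ) * ((n:ℝ)+1)
          ≤ (t:ℝ) * (n.choose k : ℝ) * ((n:ℝ)+1) := by
            apply mul_le_mul_of_nonneg_right key (le_of_lt hn1)
        _ = (t:ℝ) * (((n:ℝ)+1) * (n.choose k : ℝ)) := by ring
    linarith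
end

section
/- Let n be a natural number with n ≥ 4 and n divisible by 4. Then there exist q₀, q₁ ∈ [0,1] (namely q₀ = 1 and q₁ = 1/(n+1)) such that for every k with 0 ≤ k ≤ n/2: if k is even then q₀·E_k + q₁·(1 − E_k) ≥ 1/2 + 1/(2(n+1)), and if k is odd then (1 − q₀)·E_k + (1 − q₁)·(1 − E_k) ≥ 1/2 + 1/(2(n+1)), where E_k = ∑_{ℓ ≤ k, ℓ even} p_k(ℓ). Hence the parity of the Hamming weight can be computed from a weak Schur sampling outcome with worst-case success probability at least 1/2 + 1/(2(n+1)). -/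
/-- `E_k`: the probability that the weak Schur sampling outcome `ℓ` is even, on an
input of Hamming weight `k`. -/
noncomputable def evenOutcomeProb (n k : ℕ) : ℝ :=
  ∑ ℓ ∈ (Finset.range (k + 1)).filter (fun ℓ => Even ℓ), schurProb n k ℓ

lemma sum_aux (n : ℕ) (hn : 1 ≤ n) (k : ℕ) :
    ∑ ℓ ∈ (Finset.range (k + 1)).filter (fun ℓ => Even ℓ),
      ((n.choose ℓ : ℝ) - (if ℓ = 0 then 0 else (n.choose (ℓ - 1) : ℝ)))
    = if Even k then ((n - 1).choose k : ℝ) else ((n - 1).choose (k - 1) : ℝ) := by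
  obtain ⟨m, rfl⟩ := Nat.exists_eq_succ_of_ne_zero (by omega : n ≠ 0)
  induction k with
  | zero => simp [Finset.sum_filter]
  | succ k ih =>
    rw [Finset.sum_filter] at ih ⊢
    rw [Finset.sum_range_succ, ih]
    by_cases hk : Even k
    · have h1 : ¬ Even (k + 1) := by simp [Nat.even_add_one, hk]
      simp [hk, h1]
    · have h1 : Even (k + 1) := by simp [Nat.even_add_one, hk]
      obtain ⟨j, rfl⟩ := Nat.exists_eq_succ_of_ne_zero
        (by rintro rfl; exact hk (Even.zero) : k ≠ 0)
      simp only [hk, h1, if_true, if_false, if_neg (by omega : ¬ (j + 1 + 1 = 0))]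
      simp only [Nat.succ_sub_one, Nat.choose_succ_succ]
      push_cast
      ring

lemma even_prob_eq (n k : ℕ) (hn : 1 ≤ n) (hk : k ≤ n) :
    evenOutcomeProb n k
      = (if Even k then ((n - 1).choose k : ℝ) else ((n - 1).choose (k - 1) : ℝ))
        / (n.choose k : ℝ) := by
  unfold evenOutcomeProb schurProb
  rw [← sum_aux n hn k, Finset.sum_div]
  apply Finset.sum_congr rfl
  intro ℓ hℓ
  simp only [Finset.mem_filter, Finset.mem_range] at hℓ
  rw [if_pos (by omega)]

lemma id1 (n k : ℕ) (h : k ≤ n) : (n - k) * n.choose k = n * (n - 1).choose k := by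
  cases n with
  | zero => simp [Nat.le_zero.mp h]
  | succ m =>
  cases k with
  | zero => simp
  | succ j =>
    have hj : j ≤ m := by omega
    rw [Nat.succ_sub_succ, Nat.choose_succ_succ, Nat.succ_sub_one, Nat.mul_add]
    have h2 := Nat.choose_succ_right_eq m j
    -- h2 : m.choose (j+1) * (j+1) = m.choose j * (m - j)
    have hsum : (j + 1) + (m - j) = m + 1 := by omega
    calc (m - j) * m.choose j + (m - j) * m.choose (j + 1)
        = m.choose (j + 1) * (j + 1) + (m - j) * m.choose (j + 1) := by
          rw [h2, Nat.mul_comm]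
      _ = ((j + 1) + (m - j)) * m.choose (j + 1) := by ring
      _ = (m + 1) * m.choose (j + 1) := by rw [hsum]

lemma id2 (n k : ℕ) (h1 : 1 ≤ k) (h : k ≤ n) :
    k * n.choose k = n * (n - 1).choose (k - 1) := by
  obtain ⟨m, rfl⟩ := Nat.exists_eq_succ_of_ne_zero (by omega : n ≠ 0)
  obtain ⟨j, rfl⟩ := Nat.exists_eq_succ_of_ne_zero (by omega : k ≠ 0)
  have h2 := Nat.add_one_mul_choose_eq m j
  simp only [Nat.succ_sub_one]
  calc (j + 1) * (m + 1).choose (j + 1) = (m + 1).choose (j + 1) * (j + 1) := by ring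
    _ = (m + 1) * m.choose j := by rw [← h2]

lemma even_val (n k : ℕ) (hn : 1 ≤ n) (hk : k ≤ n) (he : Even k) :
    evenOutcomeProb n k = ((n : ℝ) - k) / n := by
  rw [even_prob_eq n k hn hk, if_pos he]
  have hc : (0 : ℝ) < (n.choose k : ℝ) := by exact_mod_cast Nat.choose_pos hk
  have hn' : (0 : ℝ) < (n : ℝ) := by exact_mod_cast hn
  rw [div_eq_div_iff hc.ne' hn'.ne']
  have h := id1 n k hk
  have : ((n - k) * n.choose k : ℕ) = (n * (n - 1).choose k : ℕ) := h
  have hcast : ((n : ℝ) - k) * (n.choose k : ℝ) = (n : ℝ) * ((n - 1).choose k : ℝ) := by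
    have := congrArg (fun x : ℕ => (x : ℝ)) this
    push_cast [Nat.cast_sub hk] at this
    linarith [this]
  linarith [hcast]

lemma odd_val (n k : ℕ) (hn : 1 ≤ n) (hk : k ≤ n) (ho : Odd k) :
    evenOutcomeProb n k = (k : ℝ) / n := by
  rw [even_prob_eq n k hn hk, if_neg (Nat.not_even_iff_odd.mpr ho)]
  have hc : (0 : ℝ) < (n.choose k : ℝ) := by exact_mod_cast Nat.choose_pos hk
  have hn' : (0 : ℝ) < (n : ℝ) := by exact_mod_cast hn
  rw [div_eq_div_iff hc.ne' hn'.ne']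
  have h := id2 n k ho.pos hk
  have hcast : (k : ℝ) * (n.choose k : ℝ) = (n : ℝ) * ((n - 1).choose (k - 1) : ℝ) := by
    exact_mod_cast congrArg (fun x : ℕ => (x : ℝ)) h
  linarith [hcast]

/-- For `n ≥ 4` divisible by `4`, there exist `q₀, q₁ ∈ [0,1]` (namely `q₀ = 1` and
`q₁ = 1/(n+1)`) such that for every `k ≤ n/2`: if `k` is even then
`q₀ E_k + q₁ (1 − E_k) ≥ 1/2 + 1/(2(n+1))`, and if `k` is odd then
`(1 − q₀) E_k + (1 − q₁)(1 − E_k) ≥ 1/2 + 1/(2(n+1))`. Hence the parity of the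
Hamming weight can be computed with worst-case success probability at least
`1/2 + 1/(2(n+1))`. -/
theorem parity_two_sided (n : ℕ) (hn : 4 ≤ n) (hdvd : 4 ∣ n) :
    ∃ q₀ q₁ : ℝ, q₀ ∈ Set.Icc (0 : ℝ) 1 ∧ q₁ ∈ Set.Icc (0 : ℝ) 1 ∧
      q₀ = 1 ∧ q₁ = 1 / ((n : ℝ) + 1) ∧
      ∀ k : ℕ, k ≤ n / 2 →
        (Even k →
          q₀ * evenOutcomeProb n k + q₁ * (1 - evenOutcomeProb n k)
            ≥ 1 / 2 + 1 / (2 * ((n : ℝ) + 1))) ∧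
        (Odd k →
          (1 - q₀) * evenOutcomeProb n k + (1 - q₁) * (1 - evenOutcomeProb n k)
            ≥ 1 / 2 + 1 / (2 * ((n : ℝ) + 1))) := by
  have hn0 : (0 : ℝ) < (n : ℝ) := by exact_mod_cast (by omega : 0 < n)
  have hn1 : (0 : ℝ) < (n : ℝ) + 1 := by linarith
  refine ⟨1, 1 / ((n : ℝ) + 1), ?_, ?_, rfl, rfl, ?_⟩
  · exact ⟨zero_le_one, le_refl 1⟩
  · constructor
    · positivity
    · rw [div_le_one hn1]; linarith
  intro k hk
  constructor
  · intro he
    have h2k : 2 * k ≤ n := by omega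
    have h2k' : 2 * (k : ℝ) ≤ (n : ℝ) := by exact_mod_cast h2k
    rw [even_val n k (by omega) (by omega) he]
    rw [ge_iff_le, ← sub_nonneg]
    have heq : 1 * (((n : ℝ) - k) / n) + 1 / ((n : ℝ) + 1) * (1 - ((n : ℝ) - k) / n)
        - (1 / 2 + 1 / (2 * ((n : ℝ) + 1)))
        = ((n : ℝ) - 2 * k) / (2 * ((n : ℝ) + 1)) := by
      field_simp
      ring
    rw [heq]
    apply div_nonneg <;> linarith
  · intro ho
    have h2k : 2 * k + 2 ≤ n := by
      have := Nat.odd_iff.mp ho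
      omega
    have h2k' : 2 * (k : ℝ) + 2 ≤ (n : ℝ) := by exact_mod_cast h2k
    rw [odd_val n k (by omega) (by omega) ho]
    rw [ge_iff_le, ← sub_nonneg]
    have heq : (1 - 1) * ((k : ℝ) / n) + (1 - 1 / ((n : ℝ) + 1)) * (1 - (k : ℝ) / n)
        - (1 / 2 + 1 / (2 * ((n : ℝ) + 1)))
        = ((n : ℝ) - 2 * k - 2) / (2 * ((n : ℝ) + 1)) := by
      field_simp
      ring
    rw [heq]
    apply div_nonneg <;> linarith
end

section
/- Let n be a natural number with n ≥ 1 and set m = ⌊n/2⌋. For every array of real numbers O(k,ℓ) for 0 ≤ k, ℓ ≤ m satisfying O(k,ℓ) ≥ 0 and ∑_{k=0}^{m} O(k,ℓ) = 1 for each ℓ ≤ m, the total success probability of the inference strategy O under a uniform prior satisfies ∑_{k=0}^{m} ∑_{ℓ=0}^{k} O(k,ℓ)·(C(n,ℓ) − C(n,ℓ−1))/C(n,k) ≤ ∑_{k=0}^{m} (1 − k/(n − k + 1)). That is, under a uniform prior on the Hamming weight, no strategy for inferring the weight from a weak Schur sampling outcome beats the standard algorithm that guesses k = ℓ. -/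
lemma choose_mono_half_s13 {n a b : ℕ} (hab : a ≤ b) (hb : b ≤ n / 2) :
    n.choose a ≤ n.choose b := by
  induction b with
  | zero => simp_all
  | succ b ih =>
    rcases Nat.eq_or_lt_of_le hab with h | h
    · exact h ▸ le_rfl
    · exact le_trans (ih (Nat.lt_succ_iff.mp h)
        (le_trans (Nat.le_succ b) hb))
        (Nat.choose_le_succ_of_lt_half_left hb)

/-- Let `n ≥ 1` and `m = ⌊n/2⌋`. For every column-stochastic inference strategy
`O(k,ℓ)` (`O(k,ℓ) ≥ 0` and `∑_{k=0}^{m} O(k,ℓ) = 1` for each `ℓ ≤ m`), the total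
success probability under a uniform prior satisfies
`∑_{k=0}^{m} ∑_{ℓ=0}^{k} O(k,ℓ)(C(n,ℓ) − C(n,ℓ−1))/C(n,k)
  ≤ ∑_{k=0}^{m} (1 − k/(n − k + 1))`,
i.e. no strategy beats the standard algorithm that guesses `k = ℓ`. -/
theorem uniform_prior_standard_optimal (n : ℕ) (hn : 1 ≤ n) (m : ℕ) (hm : m = n / 2)
    (O : ℕ → ℕ → ℝ)
    (hO_nonneg : ∀ k ℓ, k ≤ m → ℓ ≤ m → 0 ≤ O k ℓ)
    (hO_sum : ∀ ℓ, ℓ ≤ m → ∑ k ∈ Finset.range (m + 1), O k ℓ = 1) :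
    ∑ k ∈ Finset.range (m + 1), ∑ ℓ ∈ Finset.range (k + 1),
        O k ℓ * (((n.choose ℓ : ℝ) - (if ℓ = 0 then 0 else (n.choose (ℓ - 1) : ℝ)))
          / (n.choose k : ℝ))
      ≤ ∑ k ∈ Finset.range (m + 1), (1 - (k : ℝ) / ((n : ℝ) - k + 1)) := by
  set d : ℕ → ℝ := fun ℓ =>
    (n.choose ℓ : ℝ) - (if ℓ = 0 then 0 else (n.choose (ℓ - 1) : ℝ)) with hd_def
  have hmn : m ≤ n := hm ▸ Nat.div_le_self n 2
  have hcpos : ∀ k, k ≤ m → (0 : ℝ) < (n.choose k : ℝ) := by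
    intro k hk
    exact_mod_cast Nat.choose_pos (le_trans hk hmn)
  have hd_nonneg : ∀ ℓ, ℓ ≤ m → 0 ≤ d ℓ := by
    intro ℓ hℓ
    simp only [hd_def]
    split_ifs with h
    · simpa using (hcpos ℓ hℓ).le
    · have : n.choose (ℓ - 1) ≤ n.choose ℓ :=
        choose_mono_half_s13 (Nat.sub_le ℓ 1) (hm ▸ hℓ)
      simp only [sub_nonneg]
      exact_mod_cast this
  -- the key identity for the RHS terms
  have hRHS : ∀ ℓ, ℓ ≤ m → d ℓ / (n.choose ℓ : ℝ) = 1 - (ℓ : ℝ) / ((n : ℝ) - ℓ + 1) := by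
    intro ℓ hℓ
    rcases Nat.eq_zero_or_pos ℓ with h | h
    · subst h; simp [hd_def]
    · have hℓn : ℓ ≤ n := le_trans hℓ hmn
      have hden : (0 : ℝ) < (n : ℝ) - ℓ + 1 := by
        have : (ℓ : ℝ) ≤ n := by exact_mod_cast hℓn
        linarith
      have hcp := hcpos ℓ hℓ
      have hid : (n.choose ℓ : ℝ) * ℓ = (n.choose (ℓ - 1) : ℝ) * ((n : ℝ) - ℓ + 1) := by
        have h1 : n.choose (ℓ - 1 + 1) * (ℓ - 1 + 1) = n.choose (ℓ - 1) * (n - (ℓ - 1)) :=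
          Nat.choose_succ_right_eq n (ℓ - 1)
        have h2 : ℓ - 1 + 1 = ℓ := Nat.succ_pred_eq_of_pos h
        have h3 : n - (ℓ - 1) = n - ℓ + 1 := by omega
        rw [h2, h3] at h1
        have h1' : ((n.choose ℓ * ℓ : ℕ) : ℝ) = ((n.choose (ℓ - 1) * (n - ℓ + 1) : ℕ) : ℝ) := by
          exact_mod_cast congrArg (Nat.cast : ℕ → ℝ) h1
        push_cast [Nat.cast_sub hℓn] at h1'
        linarith [h1']
      simp only [hd_def, if_neg (Nat.pos_iff_ne_zero.mp h)]
      field_simp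
      linarith [hid]
  calc ∑ k ∈ Finset.range (m + 1), ∑ ℓ ∈ Finset.range (k + 1),
        O k ℓ * (d ℓ / (n.choose k : ℝ))
      ≤ ∑ k ∈ Finset.range (m + 1), ∑ ℓ ∈ Finset.range (k + 1),
        O k ℓ * (d ℓ / (n.choose ℓ : ℝ)) := by
        apply Finset.sum_le_sum
        intro k hk
        rw [Finset.mem_range, Nat.lt_succ_iff] at hk
        apply Finset.sum_le_sum
        intro ℓ hℓ
        rw [Finset.mem_range, Nat.lt_succ_iff] at hℓ
        have hℓm : ℓ ≤ m := le_trans hℓ hk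
        apply mul_le_mul_of_nonneg_left _ (hO_nonneg k ℓ hk hℓm)
        have hle : (n.choose ℓ : ℝ) ≤ (n.choose k : ℝ) := by
          exact_mod_cast choose_mono_half_s13 hℓ (hm ▸ hk)
        exact div_le_div_of_nonneg_left (hd_nonneg ℓ hℓm) (hcpos ℓ hℓm) hle
    _ ≤ ∑ k ∈ Finset.range (m + 1), ∑ ℓ ∈ Finset.range (m + 1),
        O k ℓ * (d ℓ / (n.choose ℓ : ℝ)) := by
        apply Finset.sum_le_sum
        intro k hk
        rw [Finset.mem_range, Nat.lt_succ_iff] at hk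
        apply Finset.sum_le_sum_of_subset_of_nonneg
        · exact Finset.range_subset_range.mpr (by omega)
        · intro ℓ hℓ _
          rw [Finset.mem_range, Nat.lt_succ_iff] at hℓ
          exact mul_nonneg (hO_nonneg k ℓ hk hℓ)
            (div_nonneg (hd_nonneg ℓ hℓ) (hcpos ℓ hℓ).le)
    _ = ∑ ℓ ∈ Finset.range (m + 1), (d ℓ / (n.choose ℓ : ℝ)) *
          ∑ k ∈ Finset.range (m + 1), O k ℓ := by
        rw [Finset.sum_comm]
        apply Finset.sum_congr rfl
        intro ℓ _
        rw [Finset.mul_sum]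
        exact Finset.sum_congr rfl fun k _ => mul_comm _ _
    _ = ∑ k ∈ Finset.range (m + 1), (1 - (k : ℝ) / ((n : ℝ) - k + 1)) := by
        apply Finset.sum_congr rfl
        intro ℓ hℓ
        rw [Finset.mem_range, Nat.lt_succ_iff] at hℓ
        rw [hO_sum ℓ hℓ, mul_one, hRHS ℓ hℓ]
end
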